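/- Let C be a Cartan matrix of finite type with symmetrizing integers r_i (so that DC is symmetric with D = diag(r_1,...,r_n)), and define the monomials A_{i,a} = Y_{i,aq_i^{-1}} Y_{i,aq_i} ∏_{j: C_{j,i}=-1} Y_{j,a}^{-1} ∏_{j: C_{j,i}=-2} Y_{j,aq^{-1}}^{-1} Y_{j,aq}^{-1} ∏_{j: C_{j,i}=-3} Y_{j,aq^2}^{-1} Y_{j,a}^{-1} Y_{j,aq^{-2}}^{-1}, where q_i = q^{r_i}. Then for every i ∈ I and a ∈ ℂ*, the monomial A_{i,a}^{-1} is right-negative. -/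

import Mathlib

noncomputable section

/-- A monomial in the variables `Y_{i,a}` (`i ∈ I`, `a ∈ ℂˣ`), written additively as its
finitely supported exponent function. -/
abbrev GMon (I : Type*) : Type _ := (I × ℂˣ) →₀ ℤ

/-- A monomial `m ≠ 1` is right-negative if for every `a ∈ ℂˣ`, at the maximal `L` such that
some variable `Y_{j, aq^L}` occurs in `m`, all occurring exponents at shift `L` are negative. -/
def RightNeg {I : Type*} (q : ℂˣ) (m : GMon I) : Prop :=
  m ≠ 0 ∧ ∀ (a : ℂˣ) (L : ℤ), (∃ i, m (i, a * q ^ L) ≠ 0) →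
    (∀ (i : I) (l : ℤ), L < l → m (i, a * q ^ l) = 0) → ∀ j, m (j, a * q ^ L) ≤ 0

/-- A monomial is dominant if all its exponents are nonnegative. -/
def Dominant {I : Type*} (m : GMon I) : Prop := ∀ p, 0 ≤ m p

/-- The monomial `A_{i,a}` associated to the Cartan matrix `C` with symmetrizers `r`:
`A_{i,a} = Y_{i,aq_i⁻¹} Y_{i,aq_i} ∏_{C_{j,i}=-1} Y_{j,a}⁻¹
  ∏_{C_{j,i}=-2} Y_{j,aq⁻¹}⁻¹Y_{j,aq}⁻¹ ∏_{C_{j,i}=-3} Y_{j,aq²}⁻¹Y_{j,a}⁻¹Y_{j,aq⁻²}⁻¹`,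
where `q_i = q^{r_i}`. -/
def Amon {I : Type*} [Fintype I] [DecidableEq I] (q : ℂˣ) (C : I → I → ℤ) (r : I → ℤ)
    (i : I) (a : ℂˣ) : GMon I :=
  Finsupp.single (i, a * q ^ (-(r i))) 1 + Finsupp.single (i, a * q ^ (r i)) 1
  - ∑ j : I, (if C j i = -1 then Finsupp.single (j, a) 1
      else if C j i = -2 then Finsupp.single (j, a * q⁻¹) 1 + Finsupp.single (j, a * q) 1
      else if C j i = -3 then
        Finsupp.single (j, a * q ^ (2:ℤ)) 1 + Finsupp.single (j, a) 1 +
          Finsupp.single (j, a * q ^ (-2:ℤ)) 1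
      else 0)

/-- The highest weight monomial `m_{k,a}^{(i)} = ∏_{s=1}^{k} Y_{i, a q_i^{2s-2}}` of a
Kirillov-Reshetikhin module, `q_i = q^{r_i}`. -/
def mki {I : Type*} [DecidableEq I] (q : ℂˣ) (r : I → ℤ) (i : I) (k : ℕ) (a : ℂˣ) : GMon I :=
  ∑ s ∈ Finset.range k, Finsupp.single (i, a * q ^ (r i * (2 * (s : ℤ)))) 1

/-- The weight `ω(m) = Σ u_{i,a}(m) Λ_i` of a monomial, written in coordinates with respect
to the fundamental weights `Λ_i`. -/
def wt {I : Type*} [DecidableEq I] (m : GMon I) (i : I) : ℤ :=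
  m.sum fun p v => if p.1 = i then v else 0

/-- for a finite-type Cartan matrix, each `A_{i,a}⁻¹` is right-negative. -/
theorem Ainv_rightNeg
    {I : Type*} [Fintype I] [DecidableEq I] (q : ℂˣ) (hq : ∀ n : ℤ, n ≠ 0 → q ^ n ≠ 1)
    (C : I → I → ℤ) (r : I → ℤ)
    (hdiag : ∀ i, C i i = 2) (hoff : ∀ i j, i ≠ j → -3 ≤ C i j ∧ C i j ≤ 0)
    (hzero : ∀ i j, C i j = 0 ↔ C j i = 0)
    (hfin : ∀ i j, i ≠ j → C i j * C j i ≤ 3)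
    (hr1 : ∀ i, 1 ≤ r i) (hr3 : ∀ i, r i ≤ 3)
    (hsym : ∀ i j, r i * C i j = r j * C j i)
    (i : I) (a : ℂˣ) :
    RightNeg q (-(Amon q C r i a)) := by
  have hqinj : ∀ n m : ℤ, q ^ n = q ^ m → n = m := by
    intro n m h
    by_contra hne
    exact hq (n - m) (sub_ne_zero.mpr hne) (by rw [zpow_sub, h]; simp)
  have hterm : ∀ (j : I) (y : ℂˣ),
      (if C j i = -1 then Finsupp.single (j, a) (1:ℤ)
        else if C j i = -2 then Finsupp.single (j, a * q⁻¹) 1 + Finsupp.single (j, a * q) 1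
        else if C j i = -3 then
          Finsupp.single (j, a * q ^ (2:ℤ)) 1 + Finsupp.single (j, a) 1 +
            Finsupp.single (j, a * q ^ (-2:ℤ)) 1
        else 0) (i, y) = 0 := by
    intro j y
    rcases eq_or_ne j i with rfl | h
    · simp [hdiag j]
    · split_ifs <;>
        simp [Finsupp.single_apply, Finsupp.add_apply, Prod.ext_iff, h]
  have hne1 : ((i, a * q ^ (-(r i))) : I × ℂˣ) ≠ (i, a * q ^ (r i)) := by
    intro h
    have h2 := congrArg Prod.snd h
    have h3 := hqinj _ _ (mul_left_cancel h2)
    have := hr1 i; omega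
  have hval : (-(Amon q C r i a)) (i, a * q ^ (r i)) = -1 := by
    simp only [Amon, Finsupp.neg_apply, Finsupp.sub_apply, Finsupp.add_apply,
      Finsupp.finset_sum_apply]
    rw [Finsupp.single_eq_of_ne' hne1, Finsupp.single_eq_same,
      Finset.sum_eq_zero fun j _ => hterm j _]
    norm_num
  constructor
  · intro h
    rw [h] at hval
    simp at hval
  · intro a' L _hex hmax j'
    by_contra hpos
    push_neg at hpos
    have hcontr : ∀ s : ℤ, s < r i → a' * q ^ L = a * q ^ s → False := by
      intro s hs heq
      have h0 := hmax i (L + (r i - s)) (by omega)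
      rw [zpow_add, ← mul_assoc, heq, mul_assoc, ← zpow_add,
        show s + (r i - s) = r i by ring] at h0
      exact absurd (h0.symm.trans hval) (by norm_num)
    -- extract a nonzero term in the sum
    simp only [Amon, Finsupp.neg_apply, Finsupp.sub_apply, Finsupp.add_apply] at hpos
    have hs1 : (0:ℤ) ≤ Finsupp.single (i, a * q ^ (-(r i))) (1:ℤ) (j', a' * q ^ L) := by
      rw [Finsupp.single_apply]; split <;> norm_num
    have hs2 : (0:ℤ) ≤ Finsupp.single (i, a * q ^ (r i)) (1:ℤ) (j', a' * q ^ L) := by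
      rw [Finsupp.single_apply]; split <;> norm_num
    have hS : (∑ j : I, (if C j i = -1 then Finsupp.single (j, a) (1:ℤ)
        else if C j i = -2 then Finsupp.single (j, a * q⁻¹) 1 + Finsupp.single (j, a * q) 1
        else if C j i = -3 then
          Finsupp.single (j, a * q ^ (2:ℤ)) 1 + Finsupp.single (j, a) 1 +
            Finsupp.single (j, a * q ^ (-2:ℤ)) 1
        else 0)) (j', a' * q ^ L) ≠ 0 := by omega
    rw [Finsupp.finset_sum_apply] at hS
    obtain ⟨j, -, hj⟩ := Finset.exists_ne_zero_of_sum_ne_zero hS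
    split_ifs at hj with h1 h2 h3
    · -- C j i = -1
      rw [Finsupp.single_apply] at hj
      have hp : ((j, a) : I × ℂˣ) = (j', a' * q ^ L) := by
        by_contra hne; rw [if_neg hne] at hj; exact hj rfl
      have heq : a' * q ^ L = a * q ^ (0:ℤ) := by
        rw [zpow_zero, mul_one]; exact (congrArg Prod.snd hp).symm
      exact hcontr 0 (by have := hr1 i; omega) heq
    · -- C j i = -2
      have hji : j ≠ i := by intro h; rw [h, hdiag i] at h2; omega
      have hCne : C i j ≠ 0 := fun h => (by rw [(hzero i j).mp h] at h2; omega)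
      have hb := hoff i j (Ne.symm hji)
      have hf := hfin j i hji
      rw [h2] at hf
      have hCij : C i j = -1 := by omega
      have hri : 2 ≤ r i := by
        have h7 := hsym i j
        rw [hCij, h2] at h7
        have := hr1 j; omega
      rw [Finsupp.add_apply, Finsupp.single_apply, Finsupp.single_apply] at hj
      rcases eq_or_ne ((j, a * q⁻¹) : I × ℂˣ) (j', a' * q ^ L) with hp | hp
      · have heq : a' * q ^ L = a * q ^ (-1:ℤ) := by
          rw [zpow_neg_one]; exact (congrArg Prod.snd hp).symm
        exact hcontr (-1) (by omega) heq
      rcases eq_or_ne ((j, a * q) : I × ℂˣ) (j', a' * q ^ L) with hp' | hp'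
      · have heq : a' * q ^ L = a * q ^ (1:ℤ) := by
          rw [zpow_one]; exact (congrArg Prod.snd hp').symm
        exact hcontr 1 (by omega) heq
      · rw [if_neg hp, if_neg hp'] at hj; exact hj rfl
    · -- C j i = -3
      have hji : j ≠ i := by intro h; rw [h, hdiag i] at h3; omega
      have hCne : C i j ≠ 0 := fun h => (by rw [(hzero i j).mp h] at h3; omega)
      have hb := hoff i j (Ne.symm hji)
      have hf := hfin j i hji
      rw [h3] at hf
      have hCij : C i j = -1 := by omega
      have hri : 3 ≤ r i := by
        have h7 := hsym i j
        rw [hCij, h3] at h7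
        have := hr1 j; omega
      rw [Finsupp.add_apply, Finsupp.add_apply, Finsupp.single_apply, Finsupp.single_apply,
        Finsupp.single_apply] at hj
      rcases eq_or_ne ((j, a * q ^ (2:ℤ)) : I × ℂˣ) (j', a' * q ^ L) with hp | hp
      · exact hcontr 2 (by omega) (congrArg Prod.snd hp).symm
      rcases eq_or_ne ((j, a) : I × ℂˣ) (j', a' * q ^ L) with hp' | hp'
      · have heq : a' * q ^ L = a * q ^ (0:ℤ) := by
          rw [zpow_zero, mul_one]; exact (congrArg Prod.snd hp').symm
        exact hcontr 0 (by omega) heq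
      rcases eq_or_ne ((j, a * q ^ (-2:ℤ)) : I × ℂˣ) (j', a' * q ^ L) with hp'' | hp''
      · exact hcontr (-2) (by omega) (congrArg Prod.snd hp'').symm
      · rw [if_neg hp, if_neg hp', if_neg hp''] at hj; exact hj rfl
    · exact hj rfl
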